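/- Let q > 2 and let Q ∈ H¹(ℝ^d) be a minimizer of E[ψ] = ∫|∇ψ|² dx − (∫|ψ|^q dx)^{2/q} over {ψ ∈ H¹(ℝ^d) : ∫ψ² dx = 1} (with q < 2d/(d-2) if d ≥ 3). Then Q does not change sign, i.e. either Q ≥ 0 a.e. or Q ≤ 0 a.e. -/

import Mathlib

open MeasureTheory

variable {d : ℕ}

/-- Membership in `H¹(ℝ^d) ∩ L^q` (with a classical derivative, for simplicity). -/
def InH1 (d : ℕ) (q : ℝ) (ψ : EuclideanSpace ℝ (Fin d) → ℝ) : Prop :=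
  MemLp ψ 2 volume ∧ MemLp ψ (ENNReal.ofReal q) volume ∧
    Differentiable ℝ ψ ∧ MemLp (fun x => ‖fderiv ℝ ψ x‖) 2 volume

/-- The GNS-type energy `E[ψ] = ∫ |∇ψ|² dx − (∫ |ψ|^q dx)^{2/q}`. -/
noncomputable def Efun (d : ℕ) (q : ℝ) (ψ : EuclideanSpace ℝ (Fin d) → ℝ) : ℝ :=
  (∫ x, ‖fderiv ℝ ψ x‖ ^ 2) - (∫ x, |ψ x| ^ q) ^ (2 / q)

section helpers

open Real Filter Topology


lemma rpow_strict_subadd {x y p : ℝ} (hx : 0 < x) (hy : 0 < y)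
    (hp0 : 0 < p) (hp1 : p < 1) : (x + y) ^ p < x ^ p + y ^ p := by
  have hs : 0 < x + y := by linarith
  have hxs : x / (x + y) < 1 := by rw [div_lt_one hs]; linarith
  have hys : y / (x + y) < 1 := by rw [div_lt_one hs]; linarith
  have h1 : x / (x + y) < (x / (x + y)) ^ p := by
    have := Real.rpow_lt_rpow_of_exponent_gt (div_pos hx hs) hxs hp1
    rwa [Real.rpow_one] at this
  have h2 : y / (x + y) < (y / (x + y)) ^ p := by
    have := Real.rpow_lt_rpow_of_exponent_gt (div_pos hy hs) hys hp1
    rwa [Real.rpow_one] at this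
  have key : 1 < (x / (x + y)) ^ p + (y / (x + y)) ^ p := by
    have : x / (x + y) + y / (x + y) = 1 := by field_simp
    linarith
  rw [Real.div_rpow hx.le hs.le, Real.div_rpow hy.le hs.le] at key
  have hsp : (0:ℝ) < (x + y) ^ p := Real.rpow_pos_of_pos hs p
  rw [← add_div, lt_div_iff₀ hsp, one_mul] at key
  linarith

lemma hasDerivAt_pp_sq (t : ℝ) : HasDerivAt (fun s : ℝ => max s 0 ^ 2) (2 * max t 0) t := by
  rcases lt_trichotomy t 0 with ht | ht | ht
  · have he : (fun s : ℝ => max s 0 ^ 2) =ᶠ[𝓝 t] fun _ => (0:ℝ) := by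
      filter_upwards [eventually_lt_nhds ht] with s hs
      simp [max_eq_right hs.le]
    rw [max_eq_right ht.le, mul_zero]
    exact (hasDerivAt_const t (0:ℝ)).congr_of_eventuallyEq he
  · subst ht
    rw [max_self, mul_zero]
    rw [hasDerivAt_iff_isLittleO, Asymptotics.isLittleO_iff]
    intro c hc
    have hev : ∀ᶠ s : ℝ in 𝓝 0, |s| ≤ c := by
      filter_upwards [Metric.ball_mem_nhds (0:ℝ) hc] with s hs
      simp only [Metric.mem_ball, Real.dist_eq, sub_zero] at hs
      exact hs.le
    filter_upwards [hev] with s hs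
    have key : ‖max s 0 ^ 2‖ ≤ c * ‖s‖ := by
      rw [Real.norm_eq_abs, Real.norm_eq_abs,
        abs_of_nonneg (by positivity : (0:ℝ) ≤ max s 0 ^ 2)]
      calc max s 0 ^ 2 ≤ |s| ^ 2 :=
            pow_le_pow_left₀ (le_max_right s 0) (max_le (le_abs_self s) (abs_nonneg s)) 2
        _ = |s| * |s| := sq |s|
        _ ≤ c * |s| := mul_le_mul_of_nonneg_right hs (abs_nonneg s)
    simpa using key
  · have he : (fun s : ℝ => max s 0 ^ 2) =ᶠ[𝓝 t] fun s => s ^ 2 := by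
      filter_upwards [eventually_gt_nhds ht] with s hs
      simp [max_eq_left hs.le]
    rw [max_eq_left ht.le]
    have : HasDerivAt (fun s : ℝ => s ^ 2) (2 * t) t := by
      simpa using (hasDerivAt_pow 2 t)
    exact this.congr_of_eventuallyEq he


noncomputable def phi (ε t : ℝ) : ℝ := Real.sqrt (max t 0 ^ 2 + ε ^ 2) - ε

lemma sqrt_arg_pos {ε t : ℝ} (hε : ε ≠ 0) : 0 < max t 0 ^ 2 + ε ^ 2 := by positivity


lemma phi_hasDerivAt {ε : ℝ} (hε : ε ≠ 0) (t : ℝ) :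
    HasDerivAt (phi ε) (max t 0 / Real.sqrt (max t 0 ^ 2 + ε ^ 2)) t := by
  have h1 : HasDerivAt (fun s : ℝ => max s 0 ^ 2 + ε ^ 2) (2 * max t 0) t :=
    (hasDerivAt_pp_sq t).add_const _
  have h2 := (Real.hasDerivAt_sqrt (ne_of_gt (sqrt_arg_pos (t := t) hε))).comp t h1
  have h3 := h2.sub_const ε
  refine HasDerivAt.congr_deriv h3 ?_
  have hs : Real.sqrt (max t 0 ^ 2 + ε ^ 2) ≠ 0 :=
    ne_of_gt (Real.sqrt_pos.mpr (sqrt_arg_pos hε))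
  field_simp

lemma phi_nonneg {ε t : ℝ} (hε : 0 ≤ ε) : 0 ≤ phi ε t := by
  have : ε ≤ Real.sqrt (max t 0 ^ 2 + ε ^ 2) := by
    rw [show ε = Real.sqrt (ε ^ 2) by rw [Real.sqrt_sq hε]]
    apply Real.sqrt_le_sqrt
    nlinarith [sq_nonneg (max t 0), Real.sq_sqrt (sq_nonneg ε)]
  simpa [phi] using this

lemma phi_le {ε t : ℝ} (hε : 0 ≤ ε) : phi ε t ≤ max t 0 := by
  have ha : (0:ℝ) ≤ max t 0 := le_max_right t 0
  have : Real.sqrt (max t 0 ^ 2 + ε ^ 2) ≤ max t 0 + ε := by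
    rw [show max t 0 + ε = Real.sqrt ((max t 0 + ε) ^ 2) by rw [Real.sqrt_sq (by linarith)]]
    apply Real.sqrt_le_sqrt
    nlinarith
  simp only [phi]
  linarith

lemma phi_pos {ε t : ℝ} (hε : 0 < ε) (ht : 0 < t) : 0 < phi ε t := by
  have : Real.sqrt (ε ^ 2) < Real.sqrt (max t 0 ^ 2 + ε ^ 2) := by
    apply Real.sqrt_lt_sqrt (sq_nonneg ε)
    have : 0 < max t 0 := lt_max_of_lt_left ht
    nlinarith
  rw [Real.sqrt_sq hε.le] at this
  simp only [phi]
  linarith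

lemma phi_deriv_nonneg {ε t : ℝ} : 0 ≤ max t 0 / Real.sqrt (max t 0 ^ 2 + ε ^ 2) :=
  div_nonneg (le_max_right t 0) (Real.sqrt_nonneg _)

lemma phi_deriv_le_one {ε t : ℝ} (hε : ε ≠ 0) :
    max t 0 / Real.sqrt (max t 0 ^ 2 + ε ^ 2) ≤ 1 := by
  rw [div_le_one (Real.sqrt_pos.mpr (sqrt_arg_pos hε))]
  rw [show max t 0 = Real.sqrt (max t 0 ^ 2) by rw [Real.sqrt_sq (le_max_right t 0)]]
  apply Real.sqrt_le_sqrt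
  nlinarith [Real.sq_sqrt (sq_nonneg (max t 0)), Real.sqrt_nonneg (max t 0 ^ 2), sq_nonneg ε]

lemma coef_sq_add {ε t : ℝ} (hε : ε ≠ 0) :
    (max t 0 / Real.sqrt (max t 0 ^ 2 + ε ^ 2)) ^ 2
      + (max (-t) 0 / Real.sqrt (max (-t) 0 ^ 2 + ε ^ 2)) ^ 2 ≤ 1 := by
  rcases le_or_gt t 0 with ht | ht
  · have h1 : max t 0 = 0 := max_eq_right ht
    have h2 := phi_deriv_le_one (t := -t) hε
    have h3 := phi_deriv_nonneg (ε := ε) (t := -t)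
    rw [h1]
    simp only [zero_div, ne_eq]
    nlinarith
  · have h1 : max (-t) 0 = 0 := max_eq_right (by linarith)
    have h2 := phi_deriv_le_one (t := t) hε
    have h3 := phi_deriv_nonneg (ε := ε) (t := t)
    rw [h1]
    simp only [zero_div, ne_eq]
    nlinarith

lemma phi_tendsto (t : ℝ) :
    Tendsto (fun n : ℕ => phi ((n + 1 : ℝ)⁻¹) t) atTop (𝓝 (max t 0)) := by
  have h0 : Tendsto (fun n : ℕ => ((n : ℝ) + 1)⁻¹) atTop (𝓝 0) :=
    tendsto_one_div_add_atTop_nhds_zero_nat.congr (by intro n; rw [one_div])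
  have hc : Continuous fun ε : ℝ => phi ε t := by
    unfold phi
    fun_prop
  have heq : phi 0 t = max t 0 := by
    simp [phi, Real.sqrt_sq (le_max_right t 0)]
  rw [← heq]
  exact (hc.tendsto 0).comp h0


lemma pp_sq_add (t : ℝ) : max t 0 ^ 2 + max (-t) 0 ^ 2 = t ^ 2 := by
  rcases le_or_gt t 0 with ht | ht
  · rw [max_eq_right ht, max_eq_left (by linarith)]; ring
  · rw [max_eq_left ht.le, max_eq_right (by linarith)]; ring

lemma pp_rpow_add {q : ℝ} (hq0 : q ≠ 0) (t : ℝ) :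
    |t| ^ q = max t 0 ^ q + max (-t) 0 ^ q := by
  rcases le_or_gt t 0 with ht | ht
  · rw [max_eq_right ht, max_eq_left (by linarith), abs_of_nonpos ht,
      Real.zero_rpow hq0, zero_add]
  · rw [max_eq_left ht.le, max_eq_right (by linarith), abs_of_pos ht,
      Real.zero_rpow hq0, add_zero]

/-- Rescaled minimality: for any `w ∈ H¹` with positive `L²` mass,
`‖w‖₂² E[Q] ≤ ‖∇w‖₂² − ‖w‖_q²`. -/
lemma scaled_min {d : ℕ} {q : ℝ} (hq : 2 < q) {Q : EuclideanSpace ℝ (Fin d) → ℝ}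
    (hmin : ∀ ψ : EuclideanSpace ℝ (Fin d) → ℝ,
      InH1 d q ψ → (∫ x, (ψ x) ^ 2) = 1 → Efun d q Q ≤ Efun d q ψ)
    {w : EuclideanSpace ℝ (Fin d) → ℝ} (hw : InH1 d q w)
    (hm : 0 < ∫ x, (w x) ^ 2) :
    (∫ x, (w x) ^ 2) * Efun d q Q ≤
      (∫ x, ‖fderiv ℝ w x‖ ^ 2) - (∫ x, |w x| ^ q) ^ (2 / q) := by
  have hq0 : q ≠ 0 := by linarith
  set m : ℝ := ∫ x, (w x) ^ 2 with hmdef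
  set c : ℝ := (Real.sqrt m)⁻¹ with hcdef
  have hc : 0 < c := inv_pos.mpr (Real.sqrt_pos.mpr hm)
  have hc2 : c ^ 2 * m = 1 := by
    rw [hcdef, inv_pow, Real.sq_sqrt hm.le]
    field_simp
  have hwd := hw.2.2.1
  have hψd : Differentiable ℝ (fun x => c * w x) := hwd.const_mul c
  have hfd : ∀ x, fderiv ℝ (fun x => c * w x) x = c • fderiv ℝ w x :=
    fun x => fderiv_const_mul (hwd x) c
  have hnorm : ∀ x, ‖fderiv ℝ (fun x => c * w x) x‖ = c * ‖fderiv ℝ w x‖ := by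
    intro x
    rw [hfd x, norm_smul, Real.norm_eq_abs, abs_of_pos hc]
  have hInH1 : InH1 d q (fun x => c * w x) := by
    refine ⟨hw.1.const_mul c, hw.2.1.const_mul c, hψd, ?_⟩
    have : (fun x => ‖fderiv ℝ (fun x => c * w x) x‖) =
        fun x => c * ‖fderiv ℝ w x‖ := funext hnorm
    rw [this]
    exact hw.2.2.2.const_mul c
  have hn1 : (∫ x, ((fun x => c * w x) x) ^ 2) = 1 := by
    simp only [mul_pow]
    rw [integral_const_mul]
    rw [← hmdef]; exact hc2
  have hInonneg : 0 ≤ ∫ x, |w x| ^ q :=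
    integral_nonneg fun x => Real.rpow_nonneg (abs_nonneg _) q
  have hE : Efun d q (fun x => c * w x) =
      c ^ 2 * ((∫ x, ‖fderiv ℝ w x‖ ^ 2) - (∫ x, |w x| ^ q) ^ (2 / q)) := by
    unfold Efun
    have h1 : (∫ x, ‖fderiv ℝ (fun x => c * w x) x‖ ^ 2) =
        c ^ 2 * ∫ x, ‖fderiv ℝ w x‖ ^ 2 := by
      simp_rw [hnorm, mul_pow]
      exact integral_const_mul _ _
    have h2 : (∫ x, |c * w x| ^ q) = c ^ q * ∫ x, |w x| ^ q := by
      simp_rw [abs_mul, abs_of_pos hc, Real.mul_rpow hc.le (abs_nonneg _)]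
      exact integral_const_mul _ _
    have hcq : (c ^ q) ^ (2 / q) = c ^ 2 := by
      rw [← Real.rpow_mul hc.le]
      rw [show q * (2 / q) = 2 by field_simp]
      exact Real.rpow_two c
    rw [h1, h2, Real.mul_rpow (Real.rpow_nonneg hc.le q) hInonneg, hcq]
    ring
  have hfin := hmin _ hInH1 hn1
  rw [hE] at hfin
  have := mul_le_mul_of_nonneg_left hfin hm.le
  calc m * Efun d q Q ≤ m * (c ^ 2 * ((∫ x, ‖fderiv ℝ w x‖ ^ 2) -
        (∫ x, |w x| ^ q) ^ (2 / q))) := this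
    _ = (c ^ 2 * m) * ((∫ x, ‖fderiv ℝ w x‖ ^ 2) - (∫ x, |w x| ^ q) ^ (2 / q)) := by ring
    _ = (∫ x, ‖fderiv ℝ w x‖ ^ 2) - (∫ x, |w x| ^ q) ^ (2 / q) := by rw [hc2, one_mul]

noncomputable def coef (ε t : ℝ) : ℝ := max t 0 / Real.sqrt (max t 0 ^ 2 + ε ^ 2)

lemma coef_nonneg {ε t : ℝ} : 0 ≤ coef ε t := phi_deriv_nonneg

lemma coef_le_one {ε t : ℝ} (hε : ε ≠ 0) : coef ε t ≤ 1 := phi_deriv_le_one hε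

lemma coef_sq_add' {ε t : ℝ} (hε : ε ≠ 0) :
    coef ε t ^ 2 + coef ε (-t) ^ 2 ≤ 1 := coef_sq_add hε

lemma hεne (n : ℕ) : (((n : ℝ) + 1)⁻¹ : ℝ) ≠ 0 := by positivity

lemma hεpos (n : ℕ) : (0:ℝ) < ((n : ℝ) + 1)⁻¹ := by positivity

variable {d : ℕ}

noncomputable def uaux (W : EuclideanSpace ℝ (Fin d) → ℝ) (n : ℕ)
    (x : EuclideanSpace ℝ (Fin d)) : ℝ := phi ((n : ℝ) + 1)⁻¹ (W x)

lemma uaux_nonneg {W : EuclideanSpace ℝ (Fin d) → ℝ} (n : ℕ) (x) :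
    0 ≤ uaux W n x := phi_nonneg (hεpos n).le

lemma uaux_le {W : EuclideanSpace ℝ (Fin d) → ℝ} (n : ℕ) (x) :
    uaux W n x ≤ max (W x) 0 := phi_le (hεpos n).le

lemma uaux_abs_le {W : EuclideanSpace ℝ (Fin d) → ℝ} (n : ℕ) (x) :
    |uaux W n x| ≤ |W x| := by
  rw [abs_of_nonneg (uaux_nonneg n x)]
  exact le_trans (uaux_le n x) (max_le (le_abs_self _) (abs_nonneg _))

lemma uaux_hasFDerivAt {W : EuclideanSpace ℝ (Fin d) → ℝ} (hW : Differentiable ℝ W)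
    (n : ℕ) (x) :
    HasFDerivAt (uaux W n) (coef ((n : ℝ) + 1)⁻¹ (W x) • fderiv ℝ W x) x := by
  exact (phi_hasDerivAt (hεne n) (W x)).comp_hasFDerivAt x (hW x).hasFDerivAt

lemma uaux_diff {W : EuclideanSpace ℝ (Fin d) → ℝ} (hW : Differentiable ℝ W) (n : ℕ) :
    Differentiable ℝ (uaux W n) := fun x => (uaux_hasFDerivAt hW n x).differentiableAt

lemma uaux_cont {W : EuclideanSpace ℝ (Fin d) → ℝ} (hW : Differentiable ℝ W) (n : ℕ) :
    Continuous (uaux W n) := (uaux_diff hW n).continuous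

lemma uaux_norm_fderiv {W : EuclideanSpace ℝ (Fin d) → ℝ} (hW : Differentiable ℝ W)
    (n : ℕ) (x) :
    ‖fderiv ℝ (uaux W n) x‖ = coef ((n : ℝ) + 1)⁻¹ (W x) * ‖fderiv ℝ W x‖ := by
  rw [(uaux_hasFDerivAt hW n x).fderiv, norm_smul, Real.norm_eq_abs,
    abs_of_nonneg coef_nonneg]

lemma coef_continuous {W : EuclideanSpace ℝ (Fin d) → ℝ} (hW : Continuous W)
    {ε : ℝ} (hε : ε ≠ 0) : Continuous fun x => coef ε (W x) := by
  apply Continuous.div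
  · exact hW.max continuous_const
  · exact ((((hW.max continuous_const).pow 2).add continuous_const)).sqrt
  · exact fun x => ne_of_gt (Real.sqrt_pos.mpr (sqrt_arg_pos hε))

lemma inH1_integrable_rpow {q : ℝ} (hq : 2 < q) {W : EuclideanSpace ℝ (Fin d) → ℝ}
    (hW : InH1 d q W) : Integrable (fun x => |W x| ^ q) volume := by
  have hne : (ENNReal.ofReal q) ≠ 0 := by
    simp only [ne_eq, ENNReal.ofReal_eq_zero, not_le]; linarith
  have := hW.2.1.integrable_norm_rpow hne ENNReal.ofReal_ne_top
  simpa [ENNReal.toReal_ofReal (by linarith : (0:ℝ) ≤ q), Real.norm_eq_abs] using this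

lemma uaux_inH1 {q : ℝ} (hq : 2 < q) {W : EuclideanSpace ℝ (Fin d) → ℝ}
    (hW : InH1 d q W) (n : ℕ) : InH1 d q (uaux W n) := by
  have hWd := hW.2.2.1
  have hc := (uaux_cont hWd n).aestronglyMeasurable (μ := volume)
  refine ⟨hW.1.of_le hc ?_, hW.2.1.of_le hc ?_, uaux_diff hWd n, ?_⟩
  · exact ae_of_all _ fun x => by
      simpa [Real.norm_eq_abs] using uaux_abs_le (W := W) n x
  · exact ae_of_all _ fun x => by
      simpa [Real.norm_eq_abs] using uaux_abs_le (W := W) n x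
  · have heq : (fun x => ‖fderiv ℝ (uaux W n) x‖) =
        fun x => coef ((n : ℝ) + 1)⁻¹ (W x) * ‖fderiv ℝ W x‖ :=
      funext (uaux_norm_fderiv hWd n)
    refine hW.2.2.2.of_le ?_ ?_
    · rw [heq]
      exact ((coef_continuous hWd.continuous (hεne n)).aestronglyMeasurable).mul
        hW.2.2.2.aestronglyMeasurable
    · refine ae_of_all _ fun x => ?_
      rw [Real.norm_eq_abs, Real.norm_eq_abs, abs_of_nonneg (norm_nonneg _),
        abs_of_nonneg (norm_nonneg _), uaux_norm_fderiv hWd n x]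
      calc coef ((n : ℝ) + 1)⁻¹ (W x) * ‖fderiv ℝ W x‖
          ≤ 1 * ‖fderiv ℝ W x‖ :=
            mul_le_mul_of_nonneg_right (coef_le_one (hεne n)) (norm_nonneg _)
        _ = ‖fderiv ℝ W x‖ := one_mul _

lemma integrable_pp_sq {W : EuclideanSpace ℝ (Fin d) → ℝ} (hW2 : MemLp W 2 volume)
    (hWc : Continuous W) : Integrable (fun x => max (W x) 0 ^ 2) volume := by
  refine hW2.integrable_sq.mono (((hWc.max continuous_const).pow 2).aestronglyMeasurable)
    (ae_of_all _ fun x => ?_)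
  rw [Real.norm_eq_abs, Real.norm_eq_abs,
    abs_of_nonneg (by positivity : (0:ℝ) ≤ max (W x) 0 ^ 2), abs_of_nonneg (sq_nonneg (W x))]
  calc max (W x) 0 ^ 2 ≤ |W x| ^ 2 :=
        pow_le_pow_left₀ (le_max_right _ _) (max_le (le_abs_self _) (abs_nonneg _)) 2
    _ = W x ^ 2 := sq_abs _

lemma integrable_pp_rpow {q : ℝ} (hq : 2 < q) {W : EuclideanSpace ℝ (Fin d) → ℝ}
    (hW : InH1 d q W) : Integrable (fun x => max (W x) 0 ^ q) volume := by
  have hq0 : (0:ℝ) ≤ q := by linarith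
  refine (inH1_integrable_rpow hq hW).mono
    (((hW.2.2.1.continuous.max continuous_const).rpow_const
      fun x => Or.inr hq0).aestronglyMeasurable) (ae_of_all _ fun x => ?_)
  rw [Real.norm_eq_abs, Real.norm_eq_abs,
    abs_of_nonneg (Real.rpow_nonneg (le_max_right _ _) q),
    abs_of_nonneg (Real.rpow_nonneg (abs_nonneg _) q)]
  exact Real.rpow_le_rpow (le_max_right _ _) (max_le (le_abs_self _) (abs_nonneg _)) hq0

lemma pp_rpow_pos {q : ℝ} (hq : 2 < q) {W : EuclideanSpace ℝ (Fin d) → ℝ}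
    (hW : InH1 d q W) (hpos : 0 < volume {x | 0 < W x}) :
    0 < ∫ x, max (W x) 0 ^ q := by
  rw [integral_pos_iff_support_of_nonneg (fun x => Real.rpow_nonneg (le_max_right _ _) q)
    (integrable_pp_rpow hq hW)]
  refine lt_of_lt_of_le hpos (measure_mono fun x hx => ?_)
  simp only [Function.mem_support]
  exact ne_of_gt (Real.rpow_pos_of_pos (lt_max_of_lt_left hx) q)

lemma uaux_tendsto_sq {q : ℝ} (hq : 2 < q) {W : EuclideanSpace ℝ (Fin d) → ℝ}
    (hW : InH1 d q W) :
    Filter.Tendsto (fun n => ∫ x, (uaux W n x) ^ 2) Filter.atTop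
      (nhds (∫ x, max (W x) 0 ^ 2)) := by
  refine tendsto_integral_of_dominated_convergence (fun x => (W x) ^ 2)
    (fun n => (((uaux_cont hW.2.2.1 n).pow 2).aestronglyMeasurable)) hW.1.integrable_sq
    (fun n => ae_of_all _ fun x => ?_) (ae_of_all _ fun x => ?_)
  · rw [Real.norm_eq_abs, abs_of_nonneg (by positivity : (0:ℝ) ≤ uaux W n x ^ 2)]
    have h1 := uaux_abs_le (W := W) n x
    calc uaux W n x ^ 2 = |uaux W n x| ^ 2 := (sq_abs _).symm
      _ ≤ |W x| ^ 2 := pow_le_pow_left₀ (abs_nonneg _) h1 2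
      _ = W x ^ 2 := sq_abs _
  · exact (phi_tendsto (W x)).pow 2

lemma uaux_tendsto_rpow {q : ℝ} (hq : 2 < q) {W : EuclideanSpace ℝ (Fin d) → ℝ}
    (hW : InH1 d q W) :
    Filter.Tendsto (fun n => ∫ x, |uaux W n x| ^ q) Filter.atTop
      (nhds (∫ x, max (W x) 0 ^ q)) := by
  have hq0 : (0:ℝ) ≤ q := by linarith
  refine tendsto_integral_of_dominated_convergence (fun x => |W x| ^ q)
    (fun n => (((uaux_cont hW.2.2.1 n).abs).rpow_const fun x => Or.inr hq0).aestronglyMeasurable)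
    (inH1_integrable_rpow hq hW)
    (fun n => ae_of_all _ fun x => ?_) (ae_of_all _ fun x => ?_)
  · rw [Real.norm_eq_abs, abs_of_nonneg (Real.rpow_nonneg (abs_nonneg _) q)]
    exact Real.rpow_le_rpow (abs_nonneg _) (uaux_abs_le n x) hq0
  · have := ((phi_tendsto (W x)).abs).rpow_const (p := q) (Or.inr hq0)
    simpa [uaux, abs_of_nonneg (le_max_right (W x) 0)] using this

lemma uaux_sq_pos {q : ℝ} (hq : 2 < q) {W : EuclideanSpace ℝ (Fin d) → ℝ}
    (hW : InH1 d q W) (hpos : 0 < volume {x | 0 < W x}) (n : ℕ) :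
    0 < ∫ x, (uaux W n x) ^ 2 := by
  rw [integral_pos_iff_support_of_nonneg (fun x => sq_nonneg _)
    ((uaux_inH1 hq hW n).1.integrable_sq)]
  refine lt_of_lt_of_le hpos (measure_mono ?_)
  intro x hx
  have : 0 < uaux W n x := phi_pos (hεpos n) hx
  simp only [Function.mem_support]
  positivity

lemma inH1_neg {q : ℝ} {W : EuclideanSpace ℝ (Fin d) → ℝ} (hW : InH1 d q W) :
    InH1 d q (fun x => -W x) := by
  refine ⟨hW.1.neg, hW.2.1.neg, hW.2.2.1.neg, ?_⟩
  have : (fun x => ‖fderiv ℝ (fun y => -W y) x‖) = fun x => ‖fderiv ℝ W x‖ := by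
    funext x
    rw [fderiv_fun_neg, norm_neg]
  rw [this]
  exact hW.2.2.2

end helpers

/-- A minimizer of `E` over the unit sphere of `L²(ℝ^d)` does not change sign. -/
theorem stmt12 (q : ℝ) (hq : 2 < q) (hq' : 3 ≤ d → q < 2 * d / (d - 2))
    (Q : EuclideanSpace ℝ (Fin d) → ℝ) (hQ : InH1 d q Q)
    (hQn : ∫ x, (Q x) ^ 2 = 1)
    (hmin : ∀ ψ : EuclideanSpace ℝ (Fin d) → ℝ,
      InH1 d q ψ → (∫ x, (ψ x) ^ 2) = 1 → Efun d q Q ≤ Efun d q ψ) :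
    (∀ᵐ x, 0 ≤ Q x) ∨ (∀ᵐ x, Q x ≤ 0) := by
  by_contra hcon
  rw [not_or] at hcon
  obtain ⟨h1, h2⟩ := hcon
  have hq0 : q ≠ 0 := by linarith
  -- both sign sets have positive measure
  have hpos : 0 < volume {x | 0 < Q x} := by
    rw [MeasureTheory.ae_iff] at h2
    simp only [not_le] at h2
    exact pos_iff_ne_zero.mpr h2
  have hneg : 0 < volume {x | Q x < 0} := by
    rw [MeasureTheory.ae_iff] at h1
    simp only [not_le] at h1
    exact pos_iff_ne_zero.mpr h1
  have hposneg : 0 < volume {x | 0 < -Q x} := by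
    convert hneg using 2
    ext x
    simp [neg_pos]
  have hQd : Differentiable ℝ Q := hQ.2.2.1
  have hQc : Continuous Q := hQd.continuous
  have hInegQ : InH1 d q (fun x => -Q x) := inH1_neg hQ
  have hIQ2 : Integrable (fun x => (Q x) ^ 2) volume := hQ.1.integrable_sq
  have hIG : Integrable (fun x => ‖fderiv ℝ Q x‖ ^ 2) volume := hQ.2.2.2.integrable_sq
  have hIQq : Integrable (fun x => |Q x| ^ q) volume := inH1_integrable_rpow hq hQ
  -- the key inequality for each n
  have key : ∀ n : ℕ,
      ((∫ x, (uaux Q n x) ^ 2) + (∫ x, (uaux (fun y => -Q y) n x) ^ 2)) * Efun d q Q ≤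
        (∫ x, ‖fderiv ℝ Q x‖ ^ 2) - (∫ x, |uaux Q n x| ^ q) ^ (2 / q)
          - (∫ x, |uaux (fun y => -Q y) n x| ^ q) ^ (2 / q) := by
    intro n
    have k1 := scaled_min hq hmin (uaux_inH1 hq hQ n) (uaux_sq_pos hq hQ hpos n)
    have k2 := scaled_min hq hmin (uaux_inH1 hq hInegQ n) (uaux_sq_pos hq hInegQ hposneg n)
    have hIu : Integrable (fun x => ‖fderiv ℝ (uaux Q n) x‖ ^ 2) volume :=
      (uaux_inH1 hq hQ n).2.2.2.integrable_sq
    have hIv : Integrable (fun x => ‖fderiv ℝ (uaux (fun y => -Q y) n) x‖ ^ 2) volume :=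
      (uaux_inH1 hq hInegQ n).2.2.2.integrable_sq
    have hgrad : (∫ x, ‖fderiv ℝ (uaux Q n) x‖ ^ 2)
        + (∫ x, ‖fderiv ℝ (uaux (fun y => -Q y) n) x‖ ^ 2)
        ≤ ∫ x, ‖fderiv ℝ Q x‖ ^ 2 := by
      rw [← integral_add hIu hIv]
      refine integral_mono (hIu.add hIv) hIG fun x => ?_
      have hu := uaux_norm_fderiv hQd n x
      have hv := uaux_norm_fderiv hInegQ.2.2.1 n x
      have hvn : ‖fderiv ℝ (fun y => -Q y) x‖ = ‖fderiv ℝ Q x‖ := by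
        rw [fderiv_fun_neg, norm_neg]
      simp only [Pi.add_apply]
      rw [hu, hv, hvn, mul_pow, mul_pow]
      have hc := coef_sq_add' (t := Q x) (hεne n)
      nlinarith [sq_nonneg (‖fderiv ℝ Q x‖), sq_nonneg (coef ((n:ℝ)+1)⁻¹ (Q x)),
        sq_nonneg (coef ((n:ℝ)+1)⁻¹ (-Q x))]
    rw [add_mul]
    linarith
  -- limits
  have t1 := uaux_tendsto_sq hq hQ
  have t2 := uaux_tendsto_sq hq hInegQ
  have hab : (∫ x, max (Q x) 0 ^ 2) + (∫ x, max (-Q x) 0 ^ 2) = 1 := by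
    rw [← integral_add (integrable_pp_sq hQ.1 hQc)
      (integrable_pp_sq hInegQ.1 hQc.neg)]
    rw [← hQn]
    exact integral_congr_ae (Filter.Eventually.of_forall fun x => pp_sq_add (Q x))
  have hLHS : Filter.Tendsto
      (fun n => ((∫ x, (uaux Q n x) ^ 2) + (∫ x, (uaux (fun y => -Q y) n x) ^ 2)) * Efun d q Q)
      Filter.atTop (nhds (Efun d q Q)) := by
    have := (t1.add t2).mul_const (Efun d q Q)
    rwa [hab, one_mul] at this
  have hP : 0 < ∫ x, max (Q x) 0 ^ q := pp_rpow_pos hq hQ hpos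
  have hN : 0 < ∫ x, max (-Q x) 0 ^ q := pp_rpow_pos hq hInegQ hposneg
  have r1 := uaux_tendsto_rpow hq hQ
  have r2 := uaux_tendsto_rpow hq hInegQ
  have hRHS : Filter.Tendsto
      (fun n => (∫ x, ‖fderiv ℝ Q x‖ ^ 2) - (∫ x, |uaux Q n x| ^ q) ^ (2 / q)
          - (∫ x, |uaux (fun y => -Q y) n x| ^ q) ^ (2 / q))
      Filter.atTop (nhds ((∫ x, ‖fderiv ℝ Q x‖ ^ 2)
        - (∫ x, max (Q x) 0 ^ q) ^ (2 / q) - (∫ x, max (-Q x) 0 ^ q) ^ (2 / q))) := by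
    exact (Filter.Tendsto.sub tendsto_const_nhds
      (r1.rpow_const (Or.inl hP.ne'))).sub (r2.rpow_const (Or.inl hN.ne'))
  have hfinal := le_of_tendsto_of_tendsto' hLHS hRHS key
  -- identify E[Q]
  have hPN : (∫ x, |Q x| ^ q) = (∫ x, max (Q x) 0 ^ q) + (∫ x, max (-Q x) 0 ^ q) := by
    rw [← integral_add (integrable_pp_rpow hq hQ) (integrable_pp_rpow hq hInegQ)]
    exact integral_congr_ae (Filter.Eventually.of_forall fun x => pp_rpow_add hq0 (Q x))
  have hEdef : Efun d q Q = (∫ x, ‖fderiv ℝ Q x‖ ^ 2)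
      - ((∫ x, max (Q x) 0 ^ q) + (∫ x, max (-Q x) 0 ^ q)) ^ (2 / q) := by
    unfold Efun
    rw [hPN]
  have hstrict := rpow_strict_subadd hP hN (by positivity : (0:ℝ) < 2 / q)
    ((div_lt_one (by linarith)).mpr hq)
  rw [hEdef] at hfinal
  linarith
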